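/- A minimal counterexample G to Ohba's Conjecture with bad list assignment L satisfies |V(G)| = 2k+1 exactly. -/

import Mathlib

/-- `f` is an acceptable colouring for the list assignment `L` on `G`:
it is proper and each vertex gets a colour from its list. -/
def IsListColoring {V : Type} (G : SimpleGraph V) (L : V → Finset ℕ) (f : V → ℕ) : Prop :=
  (∀ v, f v ∈ L v) ∧ ∀ ⦃u w : V⦄, G.Adj u w → f u ≠ f w

/-- `G` is `L`-colourable. -/
def ListColorable {V : Type} (G : SimpleGraph V) (L : V → Finset ℕ) : Prop :=
  ∃ f, IsListColoring G L f

/-- `G` is `k`-choosable: `L`-colourable whenever every list has size at least `k`. -/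
def Choosable {V : Type} (G : SimpleGraph V) (k : ℕ) : Prop :=
  ∀ L : V → Finset ℕ, (∀ v, k ≤ (L v).card) → ListColorable G L

/-- The list chromatic number of `G`. -/
noncomputable def listChromaticNumber {V : Type} (G : SimpleGraph V) : ℕ :=
  sInf {k | Choosable G k}

open Finset
open scoped Classical

/-- The set `C` of all colours appearing in some list. -/
noncomputable def colorSet {V : Type} [Fintype V] (L : V → Finset ℕ) : Finset ℕ :=
  Finset.univ.biUnion L

/-- `N_B(c)`: the set of vertices whose list contains the colour `c`. -/
noncomputable def NB {V : Type} [Fintype V] (L : V → Finset ℕ) (c : ℕ) : Finset V :=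
  Finset.univ.filter (fun v => c ∈ L v)

/-- `γ = |V(G)| - |C|`. -/
noncomputable def gam (V : Type) [Fintype V] (L : V → Finset ℕ) : ℕ :=
  Fintype.card V - (colorSet L).card

/-- The part (maximal stable set) of the complete multipartite graph with index `i`. -/
noncomputable def part {V : Type} [Fintype V] {k : ℕ} (p : V → Fin k) (i : Fin k) : Finset V :=
  Finset.univ.filter (fun v => p v = i)

/-- `v` is a singleton: the part containing `v` has exactly one element. -/
def IsSingleton {V : Type} [Fintype V] {k : ℕ} (p : V → Fin k) (v : V) : Prop :=
  (part p (p v)).card = 1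

/-- `b`: the number of non-singleton parts. -/
noncomputable def numBigParts {V : Type} [Fintype V] {k : ℕ} (p : V → Fin k) : ℕ :=
  (Finset.univ.filter (fun i : Fin k => 2 ≤ (part p i).card)).card

/-- A colour is globally frequent if it appears in the lists of at least `k+1` vertices. -/
def GloballyFrequent {V : Type} [Fintype V] (L : V → Finset ℕ) (k : ℕ) (c : ℕ) : Prop :=
  k + 1 ≤ (NB L c).card

/-- A colour is frequent among singletons if it appears in the lists of at least `γ`
singletons. -/
def FrequentAmongSingletons {V : Type} [Fintype V] {k : ℕ} (p : V → Fin k)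
    (L : V → Finset ℕ) (c : ℕ) : Prop :=
  gam V L ≤ (Finset.univ.filter (fun v => IsSingleton p v ∧ c ∈ L v)).card

/-- A colour is frequent if it is globally frequent or frequent among singletons. -/
def Frequent {V : Type} [Fintype V] {k : ℕ} (p : V → Fin k) (L : V → Finset ℕ) (c : ℕ) : Prop :=
  GloballyFrequent L k c ∨ FrequentAmongSingletons p L c

/-- A proper colouring `f : V → C` is near-acceptable for `L` if every vertex `v` satisfies
`f v ∈ L v`, or `f v` is frequent and `v` is the unique vertex coloured `f v`. -/
def NearAcceptable {V : Type} [Fintype V] {k : ℕ} (G : SimpleGraph V) (p : V → Fin k)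
    (L : V → Finset ℕ) (f : V → ℕ) : Prop :=
  (∀ v, f v ∈ colorSet L) ∧ (∀ ⦃u w : V⦄, G.Adj u w → f u ≠ f w) ∧
    ∀ v, f v ∈ L v ∨ (Frequent p L (f v) ∧ ∀ u, f u = f v → u = v)

/-- `L` is a maximal bad list assignment: adding any colour of `C` to any list makes `G`
colourable. -/
def MaximalBad {V : Type} [Fintype V] (G : SimpleGraph V) (L : V → Finset ℕ) : Prop :=
  ∀ v c, c ∈ colorSet L → c ∉ L v →
    ListColorable G (Function.update L v (insert c (L v)))

/-- A minimal counterexample to Ohba's conjecture: `G` is a complete `k`-partite graph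
(with part-indexing map `p`) on at most `2k+1` vertices, `L` is a list assignment with all
lists of size at least `k` for which `G` is not `L`-colourable (so `χ_ℓ(G) > k = χ(G)`),
and every graph on fewer vertices satisfies Ohba's conjecture. -/
structure MinCex (V : Type) [Fintype V] (G : SimpleGraph V) (k : ℕ)
    (p : V → Fin k) (L : V → Finset ℕ) : Prop where
  adj_iff : ∀ u v, G.Adj u v ↔ p u ≠ p v
  surj : Function.Surjective p
  card_le : Fintype.card V ≤ 2 * k + 1
  lists : ∀ v, k ≤ (L v).card
  bad : ¬ ListColorable G L
  minimal : ∀ (W : Type) [Fintype W] (H : SimpleGraph W) (j : ℕ),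
    Fintype.card W < Fintype.card V → H.chromaticNumber = (j : ℕ∞) →
    Fintype.card W ≤ 2 * j + 1 → listChromaticNumber H = j


open Finset in
lemma listColorable_of_hall {V : Type} [Fintype V] (G : SimpleGraph V) (L : V → Finset ℕ)
    (h : ∀ s : Finset V, s.card ≤ (s.biUnion L).card) : ListColorable G L := by
  obtain ⟨f, hf, hmem⟩ := (Finset.all_card_le_biUnion_card_iff_exists_injective L).mp h
  exact ⟨f, hmem, fun u w huw he => G.ne_of_adj huw (hf he)⟩

open Finset in
lemma choosable_card {V : Type} [Fintype V] (G : SimpleGraph V) :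
    Choosable G (Fintype.card V) := by
  intro L hL
  apply listColorable_of_hall
  intro s
  rcases s.eq_empty_or_nonempty with rfl | ⟨v, hv⟩
  · simp
  · calc s.card ≤ Fintype.card V := by
          simpa using Finset.card_le_card (Finset.subset_univ s)
      _ ≤ (L v).card := hL v
      _ ≤ (s.biUnion L).card :=
        Finset.card_le_card (fun c hc => Finset.mem_biUnion.mpr ⟨v, hv, hc⟩)

lemma choosable_mono {V : Type} [Fintype V] (G : SimpleGraph V) {j j' : ℕ}
    (h : Choosable G j) (hj : j ≤ j') : Choosable G j' :=
  fun L hL => h L (fun v => le_trans hj (hL v))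

lemma chromNum_eq {W : Type} [Fintype W] {m : ℕ} (q : W → Fin m) (hq : Function.Surjective q)
    (H : SimpleGraph W) (hadj : ∀ u v, H.Adj u v ↔ q u ≠ q v) :
    H.chromaticNumber = (m : ℕ∞) := by
  apply le_antisymm
  · exact SimpleGraph.Colorable.chromaticNumber_le
      ⟨SimpleGraph.Coloring.mk q (fun {u v} huv => (hadj u v).mp huv)⟩
  · set g := Function.surjInv hq with hgdef
    have hg : ∀ i, q (g i) = i := fun i => Function.surjInv_eq hq i
    have hginj : Function.Injective g := fun i j hij => by rw [← hg i, ← hg j, hij]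
    have hclique : H.IsClique (↑(Finset.univ.image g)) := by
      intro u hu v hv huv
      simp only [Finset.coe_image, Set.mem_image, Finset.mem_coe, Finset.mem_univ,
        Finset.coe_univ, Set.image_univ, Set.mem_range] at hu hv
      obtain ⟨i, rfl⟩ := hu; obtain ⟨j, rfl⟩ := hv
      refine (hadj _ _).mpr (fun he => huv ?_)
      rw [hg i, hg j] at he; rw [he]
    have hle := hclique.card_le_chromaticNumber
    rwa [Finset.card_image_of_injective _ hginj, Finset.card_univ, Fintype.card_fin] at hle

lemma minimal_choosable {V : Type} [Fintype V] {G : SimpleGraph V} {k : ℕ} {p : V → Fin k}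
    {L : V → Finset ℕ} (h : MinCex V G k p L)
    {W : Type} [Fintype W] (H : SimpleGraph W) {m : ℕ} (q : W → Fin m)
    (hq : Function.Surjective q) (hadj : ∀ u v, H.Adj u v ↔ q u ≠ q v)
    (hcard : Fintype.card W < Fintype.card V) (hW : Fintype.card W ≤ 2*m+1) :
    Choosable H m := by
  have hl := h.minimal W H m hcard (chromNum_eq q hq H hadj) hW
  have hne : {n | Choosable H n}.Nonempty := ⟨_, choosable_card H⟩
  have hmem := Nat.sInf_mem hne
  rwa [show sInf {n | Choosable H n} = listChromaticNumber H from rfl, hl] at hmem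

open Finset in
lemma reduce_part {V : Type} [Fintype V] {G : SimpleGraph V} {m : ℕ} {p : V → Fin (m+1)}
    {L : V → Finset ℕ} (h : MinCex V G (m+1) p L) (i0 : Fin (m+1)) (c : ℕ)
    (hc : ∀ v, p v = i0 → c ∈ L v)
    (hcardW : Fintype.card {v : V // p v ≠ i0} ≤ 2*m+1) : False := by
  set W := {v : V // p v ≠ i0} with hW
  have hsome : ∀ (x : Fin (m+1)), x ≠ i0 → (finSuccEquiv' i0 x).isSome := by
    intro x hx
    rcases hopt : finSuccEquiv' i0 x with _ | y
    · exact absurd (by rw [← finSuccEquiv'_symm_none i0, ← hopt, Equiv.symm_apply_apply]) hx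
    · rfl
  let q : W → Fin m := fun w => (finSuccEquiv' i0 (p w.1)).get (hsome _ w.2)
  have hqsome : ∀ w : W, finSuccEquiv' i0 (p w.1) = some (q w) :=
    fun w => (Option.some_get (hsome _ w.2)).symm
  have hqiff : ∀ u v : W, q u = q v ↔ p u.1 = p v.1 := by
    intro u v
    constructor
    · intro he
      exact (finSuccEquiv' i0).injective (by rw [hqsome u, hqsome v, he])
    · intro he
      have : some (q u) = some (q v) := by rw [← hqsome u, ← hqsome v, he]
      exact Option.some_inj.mp this
  have hq : Function.Surjective q := by
    intro j
    obtain ⟨v, hv⟩ := h.surj ((finSuccEquiv' i0).symm (some j))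
    have hvne : p v ≠ i0 := by
      rw [hv]
      intro he
      have := congrArg (finSuccEquiv' i0) he
      rw [Equiv.apply_symm_apply, finSuccEquiv'_at] at this
      exact Option.some_ne_none j this
    refine ⟨⟨v, hvne⟩, ?_⟩
    have h2 : finSuccEquiv' i0 (p v) = some j := by rw [hv, Equiv.apply_symm_apply]
    have h3 := hqsome ⟨v, hvne⟩
    rw [h2] at h3
    exact (Option.some_inj.mp h3).symm
  let H : SimpleGraph W :=
    { Adj := fun u v => p u.val ≠ p v.val
      symm := ⟨fun u v hh => Ne.symm hh⟩
      loopless := ⟨fun u hh => hh rfl⟩ }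
  have hadj : ∀ u v : W, H.Adj u v ↔ q u ≠ q v := by
    intro u v
    constructor
    · exact fun ha he => ha ((hqiff u v).mp he)
    · exact fun hne he => hne ((hqiff u v).mpr he)
  have hcardlt : Fintype.card W < Fintype.card V := by
    obtain ⟨v0, hv0⟩ := h.surj i0
    exact Fintype.card_subtype_lt (x := v0) (by simp [hv0])
  have hch : Choosable H m := minimal_choosable h H q hq hadj hcardlt hcardW
  obtain ⟨g, hg1, hg2⟩ := hch (fun w => (L w.1).erase c) (by
    intro w
    show m ≤ ((L w.1).erase c).card
    have h1 : (L w.1).card - 1 ≤ ((L w.1).erase c).card := Finset.pred_card_le_card_erase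
    have h2 : m + 1 ≤ (L w.1).card := h.lists w.1
    omega)
  refine h.bad ⟨fun v => if hv : p v = i0 then c else g ⟨v, hv⟩, ?_, ?_⟩
  · intro v
    by_cases hv : p v = i0
    · simpa [hv] using hc v hv
    · have := hg1 ⟨v, hv⟩
      simp only [dif_neg hv]
      exact Finset.mem_of_mem_erase this
  · intro u w huw
    have hpu : p u ≠ p w := (h.adj_iff u w).mp huw
    by_cases hu : p u = i0 <;> by_cases hw : p w = i0
    · exact absurd (hu.trans hw.symm) hpu
    · simp only [dif_pos hu, dif_neg hw]
      intro he
      exact Finset.notMem_erase c (L w) (he ▸ hg1 ⟨w, hw⟩)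
    · simp only [dif_neg hu, dif_pos hw]
      intro he
      exact Finset.notMem_erase c (L u) (he ▸ hg1 ⟨u, hu⟩)
    · simp only [dif_neg hu, dif_neg hw]
      exact hg2 (show H.Adj ⟨u, hu⟩ ⟨w, hw⟩ from hpu)

open Finset in
/-- A minimal counterexample has exactly `2k+1` vertices. -/
theorem stmt_7 (V : Type) [Fintype V] (G : SimpleGraph V) (k : ℕ) (p : V → Fin k)
    (L : V → Finset ℕ) (h : MinCex V G k p L) :
    Fintype.card V = 2 * k + 1 := by
  by_contra hne
  have hle2k : Fintype.card V ≤ 2 * k := by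
    have := h.card_le; omega
  -- k = 0 is impossible
  rcases Nat.eq_zero_or_pos k with hk0 | hkpos
  · subst hk0
    have hVempty : IsEmpty V := ⟨fun v => Fin.elim0 (p v)⟩
    exact h.bad ⟨fun _ => 0, fun v => hVempty.elim v, fun u w _ => hVempty.elim u⟩
  obtain ⟨m, rfl⟩ : ∃ m, k = m + 1 := ⟨k - 1, (Nat.succ_pred_eq_of_pos hkpos).symm⟩
  -- basic part facts
  have hpartmem : ∀ v, v ∈ part p (p v) := fun v => Finset.mem_filter.mpr ⟨Finset.mem_univ v, rfl⟩
  have hpart1 : ∀ i, 1 ≤ (part p i).card := by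
    intro i
    obtain ⟨v, hv⟩ := h.surj i
    exact Finset.card_pos.mpr ⟨v, by rw [← hv]; exact hpartmem v⟩
  have hcardW : ∀ i : Fin (m+1),
      Fintype.card {v : V // p v ≠ i} = Fintype.card V - (part p i).card := by
    intro i
    have h1 : Fintype.card {v : V // ¬ (p v = i)} =
        Fintype.card V - Fintype.card {v : V // p v = i} :=
      Fintype.card_subtype_compl _
    have h2 : Fintype.card {v : V // p v = i} = (part p i).card := Fintype.card_subtype _
    rw [← h2]; exact h1
  by_cases hA : ∃ i, (part p i).card = 1
  · -- a singleton part
    obtain ⟨i0, hi0⟩ := hA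
    obtain ⟨v0, hv0⟩ := Finset.card_eq_one.mp hi0
    have hLv0 : (L v0).Nonempty := Finset.card_pos.mp (lt_of_lt_of_le (Nat.succ_pos m) (h.lists v0))
    obtain ⟨c, hc⟩ := hLv0
    refine reduce_part h i0 c ?_ ?_
    · intro v hv
      have : v ∈ part p i0 := by rw [← hv]; exact hpartmem v
      rw [hv0, Finset.mem_singleton] at this
      rw [this]; exact hc
    · rw [hcardW i0, hi0]; omega
  · push_neg at hA
    have hge2 : ∀ i, 2 ≤ (part p i).card := by
      intro i
      have := hpart1 i; have := hA i; omega
    have hsum : ∑ i : Fin (m+1), (part p i).card = Fintype.card V := by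
      rw [← Finset.card_univ]
      exact (Finset.card_eq_sum_card_fiberwise (fun v _ => Finset.mem_univ (p v))).symm
    have heq2 : ∀ i, (part p i).card = 2 := by
      intro i
      by_contra hne2
      have h3 : 3 ≤ (part p i).card := by have := hge2 i; omega
      have hrest : 2 * m ≤ ∑ j ∈ Finset.univ.erase i, (part p j).card := by
        have := Finset.card_nsmul_le_sum (Finset.univ.erase i)
          (fun j => (part p j).card) 2 (fun j _ => hge2 j)
        rw [Finset.card_erase_of_mem (Finset.mem_univ i), Finset.card_univ,
          Fintype.card_fin, smul_eq_mul, Nat.add_sub_cancel] at this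
        omega
      have hsplit : (part p i).card + ∑ j ∈ Finset.univ.erase i, (part p j).card =
          ∑ j : Fin (m+1), (part p j).card :=
        Finset.add_sum_erase Finset.univ (fun j => (part p j).card) (Finset.mem_univ i)
      omega
    have hcardV : Fintype.card V = 2 * m + 2 := by
      rw [← hsum]
      simp [heq2, Finset.sum_const, Finset.card_univ]
      ring
    by_cases hB : ∃ i c, ∀ v, p v = i → c ∈ L v
    · obtain ⟨i0, c, hc⟩ := hB
      refine reduce_part h i0 c hc ?_
      rw [hcardW i0, heq2 i0, hcardV]; omega
    · -- all parts of size two with disjoint lists: Hall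
      have hdisj : ∀ u w, u ≠ w → p u = p w → Disjoint (L u) (L w) := by
        intro u w huw hpuw
        rw [Finset.disjoint_left]
        intro c hcu hcw
        refine hB ⟨p u, c, fun v hv => ?_⟩
        -- part p (p u) = {u, w}
        obtain ⟨a, b, hab, habs⟩ := Finset.card_eq_two.mp (heq2 (p u))
        have hu' : u ∈ part p (p u) := hpartmem u
        have hw' : w ∈ part p (p u) := by rw [hpuw]; exact hpartmem w
        have hv' : v ∈ part p (p u) := by rw [← hv]; exact hpartmem v
        rw [habs, Finset.mem_insert, Finset.mem_singleton] at hu' hw' hv'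
        rcases hv' with rfl | rfl
        · rcases hu' with rfl | rfl
          · exact hcu
          · rcases hw' with rfl | rfl
            · exact hcw
            · exact absurd rfl huw
        · rcases hw' with rfl | rfl
          · rcases hu' with rfl | rfl
            · exact absurd rfl huw
            · exact hcu
          · exact hcw
      refine h.bad (listColorable_of_hall G L ?_)
      intro s
      by_cases hs : s.card ≤ m + 1
      · rcases s.eq_empty_or_nonempty with rfl | ⟨v, hv⟩
        · simp
        · calc s.card ≤ m + 1 := hs
            _ ≤ (L v).card := h.lists v
            _ ≤ (s.biUnion L).card :=
              Finset.card_le_card (fun c hc => Finset.mem_biUnion.mpr ⟨v, hv, hc⟩)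
      · push_neg at hs
        -- some part is contained in s
        have hexists : ∃ i, part p i ⊆ s := by
          by_contra hno
          push_neg at hno
          have hch : ∀ i : Fin (m+1), ∃ v, p v = i ∧ v ∉ s := by
            intro i
            obtain ⟨v, hv, hvs⟩ := Finset.not_subset.mp (hno i)
            exact ⟨v, (Finset.mem_filter.mp hv).2, hvs⟩
          choose f hf1 hf2 using hch
          have hfinj : Function.Injective f := fun i j hij => by
            rw [← hf1 i, ← hf1 j, hij]
          have himg : Finset.univ.image f ⊆ Finset.univ \ s := by
            intro x hx
            obtain ⟨i, _, rfl⟩ := Finset.mem_image.mp hx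
            exact Finset.mem_sdiff.mpr ⟨Finset.mem_univ _, hf2 i⟩
          have h1 : m + 1 ≤ (Finset.univ \ s).card := by
            have := Finset.card_le_card himg
            rwa [Finset.card_image_of_injective _ hfinj, Finset.card_univ,
              Fintype.card_fin] at this
          rw [Finset.card_sdiff_of_subset (Finset.subset_univ s), Finset.card_univ, hcardV] at h1
          omega
        obtain ⟨i, hi⟩ := hexists
        obtain ⟨u, w, huw, habs⟩ := Finset.card_eq_two.mp (heq2 i)
        have hu : u ∈ s := hi (by rw [habs]; simp)
        have hw : w ∈ s := hi (by rw [habs]; simp)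
        have hpuw : p u = p w := by
          have h1 : u ∈ part p i := by rw [habs]; simp
          have h2 : w ∈ part p i := by rw [habs]; simp
          rw [(Finset.mem_filter.mp h1).2, (Finset.mem_filter.mp h2).2]
        have hsub : L u ∪ L w ⊆ s.biUnion L := by
          intro c hc
          rcases Finset.mem_union.mp hc with hc | hc
          · exact Finset.mem_biUnion.mpr ⟨u, hu, hc⟩
          · exact Finset.mem_biUnion.mpr ⟨w, hw, hc⟩
        have hcards : 2 * m + 2 ≤ (L u ∪ L w).card := by
          rw [Finset.card_union_of_disjoint (hdisj u w huw hpuw)]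
          have := h.lists u; have := h.lists w; omega
        have hsV : s.card ≤ 2 * m + 2 := by
          rw [← hcardV, ← Finset.card_univ]
          exact Finset.card_le_card (Finset.subset_univ s)
        calc s.card ≤ 2 * m + 2 := hsV
          _ ≤ (L u ∪ L w).card := hcards
          _ ≤ (s.biUnion L).card := Finset.card_le_card hsub
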